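/- In the Milnor-Witt K-theory ring K^MW_*(F) of a field F, for all units u, v in F^×, one has [u][v] = ε[v][u], where ε = -⟨-1⟩ = -(1 + η[-1]). -/
import Mathlib


/-- A presentation of the Milnor–Witt K-theory ring `K^MW_*(F)` of a field `F`:
a ring `R` generated by symbols `[u]` (for `u ∈ Fˣ`, here `sym u`) and `η` (here `eta`),
subject to the Milnor–Witt relations:
`η[u] = [u]η`; `[u][1-u] = 0`; `[uv] = [u] + [v] + η[u][v]`; `η(2 + η[-1]) = 0`. -/
structure MilnorWittPresentation (F : Type*) [Field F] (R : Type*) [Ring R] where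
  sym : Fˣ → R
  eta : R
  eta_comm : ∀ u : Fˣ, eta * sym u = sym u * eta
  steinberg : ∀ u v : Fˣ, (u : F) + (v : F) = 1 → sym u * sym v = 0
  sym_mul : ∀ u v : Fˣ, sym (u * v) = sym u + sym v + eta * sym u * sym v
  eta_hyperbolic : eta * (2 + eta * sym (-1)) = 0
  generates : Subring.closure (Set.range sym ∪ {eta}) = ⊤

/-- The element `⟨u⟩ := 1 + η[u]` of the Milnor–Witt K-theory ring. -/
def MilnorWittPresentation.form {F : Type*} [Field F] {R : Type*} [Ring R]
    (P : MilnorWittPresentation F R) (u : Fˣ) : R :=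
  1 + P.eta * P.sym u

namespace MilnorWittPresentation
variable {F : Type*} [Field F] {R : Type*} [Ring R] (P : MilnorWittPresentation F R)

lemma eta_central (x : R) : P.eta * x = x * P.eta := by
  have h : Subring.closure (Set.range P.sym ∪ {P.eta}) ≤ Subring.centralizer {P.eta} := by
    rw [Subring.closure_le]
    rintro y (⟨u, rfl⟩ | rfl)
    · intro z hz
      rw [Set.mem_singleton_iff] at hz; subst hz
      exact P.eta_comm u
    · intro z hz
      rw [Set.mem_singleton_iff] at hz; subst hz
      rfl
  have hx : x ∈ Subring.centralizer ({P.eta} : Set R) :=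
    h (P.generates.ge (Subring.mem_top x))
  exact Subring.mem_centralizer_iff.mp hx P.eta (Set.mem_singleton _)

lemma swap (x y : Fˣ) : P.eta * (P.sym x * P.sym y) = P.eta * (P.sym y * P.sym x) := by
  have h1 := P.sym_mul x y
  have h2 := P.sym_mul y x
  rw [mul_comm y x] at h2
  linear_combination (norm := noncomm_ring) h2 - h1

lemma eta_sym_one : P.eta * P.sym 1 = 0 := by
  have h := P.sym_mul (-1) (-1)
  rw [show ((-1 : Fˣ) * (-1)) = 1 by simp] at h
  linear_combination (norm := noncomm_ring) P.eta * h + P.eta_hyperbolic * P.sym (-1)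

lemma sym_one : P.sym 1 = 0 := by
  have h := P.sym_mul 1 1
  rw [mul_one] at h
  linear_combination (norm := noncomm_ring) -h - P.eta_sym_one * P.sym 1
lemma inv_rel (x : Fˣ) :
    P.sym x + P.sym x⁻¹ + P.eta * P.sym x * P.sym x⁻¹ = 0 := by
  have h := P.sym_mul x x⁻¹
  rw [mul_inv_cancel, P.sym_one] at h
  linear_combination (norm := noncomm_ring) -h

lemma zero_inv (x y : Fˣ) (h : P.sym x * P.sym y = 0) : P.sym x * P.sym y⁻¹ = 0 := by
  have hy := P.inv_rel y
  have hc := P.eta_central (P.sym x)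
  linear_combination (norm := noncomm_ring)
    P.sym x * hy - h + hc * (P.sym y * P.sym y⁻¹) - P.eta * h * P.sym y⁻¹

lemma zero_of_inv (x y : Fˣ) (h : P.sym x⁻¹ * P.sym y = 0) : P.sym x * P.sym y = 0 := by
  have hx := P.inv_rel x
  have hc := P.eta_central (P.sym x)
  linear_combination (norm := noncomm_ring)
    hx * P.sym y - h - P.eta * P.sym x * h
lemma mul_neg_self (u : Fˣ) : P.sym u * P.sym (-u) = 0 := by
  by_cases hu : (u : F) = 1
  · have h1 : u = 1 := Units.ext hu
    rw [h1, P.sym_one, zero_mul]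
  · have h1 : (1 : F) - (u : F) ≠ 0 := sub_ne_zero.mpr (Ne.symm hu)
    have hu0 : (u : F) ≠ 0 := Units.ne_zero u
    have c2 : (1 : F) - ((u : F))⁻¹ ≠ 0 := by
      rw [sub_ne_zero]
      exact fun hc => hu (by rw [eq_comm, inv_eq_one] at hc; exact hc)
    have h2 : (1 : F) - ((u⁻¹ : Fˣ) : F) ≠ 0 := by
      rw [Units.val_inv_eq_inv_val]; exact c2
    set a : Fˣ := Units.mk0 _ h1 with ha
    set b : Fˣ := Units.mk0 _ h2 with hb
    have hS1 : P.sym u * P.sym a = 0 := P.steinberg u a (by simp [ha])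
    have hS2 : P.sym u⁻¹ * P.sym b = 0 := P.steinberg u⁻¹ b (by simp [hb])
    have h3 : P.sym u⁻¹ * P.sym b⁻¹ = 0 := P.zero_inv _ _ hS2
    have h4 : P.sym u * P.sym b⁻¹ = 0 := P.zero_of_inv _ _ h3
    have hunit : -u = a * b⁻¹ := by
      apply Units.ext
      simp only [ha, hb, Units.val_mul, Units.val_inv_eq_inv_val, Units.val_mk0,
        Units.val_neg]
      have h : (-1 : F) + (u : F) ≠ 0 := fun hc => hu (by linear_combination hc)
      rw [show ((1:F) - (u:F)⁻¹) = (-1 + (u:F)) * (u:F)⁻¹ by field_simp; ring,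
        mul_inv, inv_inv]
      field_simp
      ring
    rw [hunit, P.sym_mul]
    have hc := P.eta_central (P.sym u)
    linear_combination (norm := noncomm_ring)
      hS1 + h4 + P.eta * hS1 * P.sym b⁻¹ - hc * (P.sym a * P.sym b⁻¹)
lemma sq (u : Fˣ) : P.sym u * P.sym u = P.sym u * P.sym (-1) := by
  have h : P.sym u = P.sym (-u) + P.sym (-1) + P.eta * P.sym (-u) * P.sym (-1) := by
    have := P.sym_mul (-u) (-1)
    rwa [show ((-u) * (-1) : Fˣ) = u by simp] at this
  have h0 := P.mul_neg_self u
  have hca := P.eta_central (P.sym u)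
  linear_combination (norm := noncomm_ring)
    P.sym u * h + h0 - hca * (P.sym (-u) * P.sym (-1)) + P.eta * h0 * P.sym (-1)

lemma cube (v : Fˣ) :
    2 * (P.sym v * P.sym v) + P.eta * (P.sym v * P.sym v * P.sym v) = 0 := by
  have hsm : P.sym (-v) = P.sym v + P.sym (-1) + P.eta * P.sym v * P.sym (-1) := by
    have := P.sym_mul v (-1)
    rwa [mul_neg_one] at this
  have h0 := P.mul_neg_self v
  have hq := P.sq v
  have hcb := P.eta_central (P.sym v)
  linear_combination (norm := noncomm_ring)
    -(P.sym v * hsm) + h0 + hq + hcb * (P.sym v * P.sym (-1)) + P.eta * P.sym v * hq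

lemma swap2 (u v : Fˣ) :
    P.eta * (P.sym v * P.sym v * P.sym u) = P.eta * (P.sym u * (P.sym v * P.sym v)) := by
  have hsw := P.swap v u
  have hcb := P.eta_central (P.sym v)
  linear_combination (norm := noncomm_ring)
    hcb * (P.sym v * P.sym u) + P.sym v * hsw - hcb * (P.sym u * P.sym v) + hsw * P.sym v

lemma stepA (u v : Fˣ) :
    P.sym u * P.sym (-(u * v)) = P.sym u * P.sym v := by
  have hX : P.sym (-(u * v)) = P.sym (-u) + P.sym v + P.eta * P.sym (-u) * P.sym v := by
    rw [show (-(u * v) : Fˣ) = (-u) * v from (neg_mul u v).symm]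
    exact P.sym_mul (-u) v
  have h0 := P.mul_neg_self u
  have hca := P.eta_central (P.sym u)
  linear_combination (norm := noncomm_ring)
    P.sym u * hX + h0 - hca * (P.sym (-u) * P.sym v) + P.eta * h0 * P.sym v

lemma stepB (u v : Fˣ) :
    P.sym v * P.sym (-(u * v)) = P.sym v * P.sym u := by
  have hX : P.sym (-(u * v)) = P.sym (-u) + P.sym v + P.eta * P.sym (-u) * P.sym v := by
    rw [show (-(u * v) : Fˣ) = (-u) * v from (neg_mul u v).symm]
    exact P.sym_mul (-u) v
  have hcdef : P.sym (-u) = P.sym (-1) + P.sym u + P.eta * P.sym (-1) * P.sym u := by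
    rw [show (-u : Fˣ) = (-1) * u from (neg_one_mul u).symm]
    exact P.sym_mul (-1) u
  have hq := P.sq v
  have hcu := P.cube v
  have hsw := P.swap v u
  have hsw2 := P.swap2 u v
  have hca := P.eta_central (P.sym u)
  have hcb := P.eta_central (P.sym v)
  linear_combination (norm := noncomm_ring)
    P.sym v * hX + P.sym v * hcdef + hcu - hq - hcb * (P.sym (-1) * P.sym u)
      - P.eta * hq * P.sym u + hsw2 - hcb * (P.sym (-u) * P.sym v)
      + P.eta * P.sym v * hcdef * P.sym v - P.eta * hq * P.sym v + hsw * P.sym v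
      - P.eta * hcb * (P.sym (-1) * P.sym u * P.sym v)
      - P.eta * P.eta * hq * (P.sym u * P.sym v) + P.eta * hsw2 * P.sym v
      + P.eta * P.sym u * hcu + P.eta * hca * (P.sym v * P.sym v * P.sym v)
end MilnorWittPresentation

/-- In `K^MW_*(F)`, for all units `u, v`, one has `[u][v] = ε[v][u]` where
`ε = -⟨-1⟩ = -(1 + η[-1])`. -/
theorem statement2 {F : Type*} [Field F] {R : Type*} [Ring R]
    (P : MilnorWittPresentation F R) (u v : Fˣ) :
    P.sym u * P.sym v = (-(P.form (-1))) * (P.sym v * P.sym u) := by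
  show P.sym u * P.sym v = -(1 + P.eta * P.sym (-1)) * (P.sym v * P.sym u)
  have h0w := P.mul_neg_self (u * v)
  have huv := P.sym_mul u v
  have haX := P.stepA u v
  have hbX := P.stepB u v
  have hqa := P.sq u
  have hsw := P.swap v u
  have hswam := P.swap u (-1)
  have hca := P.eta_central (P.sym u)
  have hcm := P.eta_central (P.sym (-1))
  linear_combination (norm := noncomm_ring)
    h0w - huv * P.sym (-(u * v)) - haX - hbX - P.eta * P.sym u * hbX
      - hca * (P.sym v * P.sym u) - P.sym u * hsw + hca * (P.sym u * P.sym v)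
      - P.eta * hqa * P.sym v - hswam * P.sym v - hcm * (P.sym u * P.sym v)
      + P.sym (-1) * hsw + hcm * (P.sym v * P.sym u)
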